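/- arXiv:1306.4233 — 2 statements merged into one kernel-verified Lean document; each statement's English description precedes it below -/
import Mathlib

section
/- Let (Σ, g) be a compact Riemannian manifold, V a positive smooth function and u a smooth function on Σ with V² = 1 + u² + |∇V|² pointwise. Then (∫_Σ V dμ)² ≥ (∫_Σ 1 dμ)² + (∫_Σ u dμ)². -/
open MeasureTheory

lemma cont_integrable_aux {X E : Type*} [TopologicalSpace X] [CompactSpace X]
    [MeasurableSpace X] [BorelSpace X] [NormedAddCommGroup E]
    [SecondCountableTopology E] [MeasurableSpace E] [BorelSpace E]
    (μ : Measure X) [IsFiniteMeasure μ] {f : X → E} (hf : Continuous f) :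
    Integrable f μ := by
  obtain ⟨C, hC⟩ : ∃ C, ∀ x, ‖f x‖ ≤ C := by
    obtain ⟨C, hC⟩ := (isCompact_range (hf.norm)).exists_bound_of_continuousOn
      continuousOn_id
    exact ⟨C, fun x => by simpa using hC _ ⟨x, rfl⟩⟩
  exact ⟨hf.aestronglyMeasurable, HasFiniteIntegral.of_bounded (C := C)
    (Filter.Eventually.of_forall hC)⟩

open MeasureTheory in
theorem stmt_5 {M : Type*} [TopologicalSpace M] [CompactSpace M] [MeasurableSpace M]
    [BorelSpace M] (μ : Measure M) [IsFiniteMeasure μ]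
    (V u w : M → ℝ) (hV : Continuous V) (hu : Continuous u) (hw : Continuous w)
    (hVpos : ∀ x, 0 < V x)
    (hrel : ∀ x, V x ^ 2 = 1 + u x ^ 2 + w x ^ 2) :
    (∫ x, (1 : ℝ) ∂μ) ^ 2 + (∫ x, u x ∂μ) ^ 2 ≤ (∫ x, V x ∂μ) ^ 2 := by
  set F : M → EuclideanSpace ℝ (Fin 2) := fun x => (WithLp.equiv 2 (Fin 2 → ℝ)).symm ![1, u x]
    with hF
  have hFcont : Continuous F := by
    apply (PiLp.continuous_toLp 2 (fun _ : Fin 2 => ℝ)).comp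
    exact continuous_pi fun i => by fin_cases i <;> simp [hu, continuous_const]
  have hFint : Integrable F μ := cont_integrable_aux μ hFcont
  have hnorm : ∀ x, ‖F x‖ = Real.sqrt (1 + u x ^ 2) := by
    intro x
    rw [EuclideanSpace.norm_eq]
    congr 1
    simp [hF, Fin.sum_univ_two, sq_abs]
  have hle : ∀ x, ‖F x‖ ≤ V x := by
    intro x
    rw [hnorm x, show V x = Real.sqrt (V x ^ 2) from (Real.sqrt_sq (hVpos x).le).symm]
    apply Real.sqrt_le_sqrt
    nlinarith [sq_nonneg (w x), hrel x]
  have hVint : Integrable V μ := cont_integrable_aux μ hV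
  have h1 : ‖∫ x, F x ∂μ‖ ≤ ∫ x, ‖F x‖ ∂μ := norm_integral_le_integral_norm _
  have h2 : ∫ x, ‖F x‖ ∂μ ≤ ∫ x, V x ∂μ :=
    integral_mono hFint.norm hVint hle
  have hproj : ∀ i, (∫ x, F x ∂μ) i = ∫ x, F x i ∂μ := by
    intro i
    have := (EuclideanSpace.proj i : EuclideanSpace ℝ (Fin 2) →L[ℝ] ℝ).integral_comp_comm hFint
    simpa using this.symm
  have hsq : ‖∫ x, F x ∂μ‖ ^ 2 = (∫ x, (1:ℝ) ∂μ) ^ 2 + (∫ x, u x ∂μ) ^ 2 := by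
    rw [EuclideanSpace.norm_eq, Real.sq_sqrt (by positivity)]
    rw [Fin.sum_univ_two, hproj 0, hproj 1]
    simp [hF, sq_abs]
  calc (∫ x, (1:ℝ) ∂μ) ^ 2 + (∫ x, u x ∂μ) ^ 2 = ‖∫ x, F x ∂μ‖ ^ 2 := hsq.symm
    _ ≤ (∫ x, ‖F x‖ ∂μ) ^ 2 := by
        apply pow_le_pow_left₀ (norm_nonneg _) h1
    _ ≤ (∫ x, V x ∂μ) ^ 2 := by
        apply pow_le_pow_left₀ (integral_nonneg fun x => norm_nonneg _) h2
end

section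
/- Let h be a real symmetric (n-1)×(n-1) matrix and define P̃^{stjl} = (1/2) δ^{i₁⋯i_{2k-2} s t}_{j₁⋯j_{2k-2} j l} h_{i₁}^{j₁} ⋯ h_{i_{2k-2}}^{j_{2k-2}} (indices raised with the identity metric). Then 2 P̃^{stjl} h_{sj} = (2k-1)! · (T_{2k-1})^t_l, where T_{2k-1} is the (2k-1)-th Newton transformation of h. -/
open Finset

lemma sum_snoc {d p : ℕ} (F : (Fin (p+1) → Fin d) → ℝ) :
    ∑ s : Fin d, ∑ ii : Fin p → Fin d, F (Fin.snoc ii s) = ∑ II : Fin (p+1) → Fin d, F II := by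
  rw [← Fintype.sum_equiv (Fin.snocEquiv (fun _ => Fin d))
    (fun x => F (Fin.snoc x.2 x.1)) F (fun x => rfl), Fintype.sum_prod_type]

lemma dite_eq_snoc {d p : ℕ} (ii : Fin p → Fin d) (s t : Fin d) :
    (fun a : Fin (p+1+1) => if ha : a.1 < p then ii ⟨a.1, ha⟩ else if a.1 = p then s else t)
    = Fin.snoc (Fin.snoc ii s) t := by
  funext a
  simp only [Fin.snoc, Fin.castLT]
  split_ifs <;> first | rfl | omega

lemma rot_det {d m : ℕ} (I J : Fin m → Fin d) (t l : Fin d) :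
    Matrix.det (Matrix.of fun a b : Fin (m+1) => if Fin.cons (α := fun _ => Fin d) t I a = Fin.cons (α := fun _ => Fin d) l J b then (1:ℝ) else 0)
  = Matrix.det (Matrix.of fun a b : Fin (m+1) => if Fin.snoc (α := fun _ => Fin d) I t a = Fin.snoc (α := fun _ => Fin d) J l b then (1:ℝ) else 0) := by
  let e : Fin (m+1) ≃ Fin (m+1) :=
  { toFun := fun a => Fin.cases (Fin.last m) Fin.castSucc a
    invFun := fun a => Fin.lastCases 0 Fin.succ a
    left_inv := by
      intro a
      induction a using Fin.cases <;> simp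
    right_inv := by
      intro a
      induction a using Fin.lastCases <;> simp }
  set M : Matrix (Fin (m+1)) (Fin (m+1)) ℝ :=
    Matrix.of fun a b : Fin (m+1) => if Fin.snoc (α := fun _ => Fin d) I t a = Fin.snoc (α := fun _ => Fin d) J l b then (1:ℝ) else 0 with hM
  rw [← Matrix.det_submatrix_equiv_self e M]
  congr 1
  ext a b
  simp only [Matrix.submatrix_apply, hM, Matrix.of_apply]
  induction a using Fin.cases <;> induction b using Fin.cases <;> simp [e]

lemma key (d p : ℕ) (h : Matrix (Fin d) (Fin d) ℝ) (t l : Fin d) :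
    ∑ s : Fin d, ∑ j : Fin d,
      (∑ ii : Fin p → Fin d, ∑ jj : Fin p → Fin d,
        Matrix.det (Matrix.of fun a b : Fin (p+1+1) =>
          if (if ha : a.1 < p then ii ⟨a.1, ha⟩ else if a.1 = p then s else t)
            = (if hb : b.1 < p then jj ⟨b.1, hb⟩ else if b.1 = p then j else l) then (1:ℝ) else 0)
        * ∏ a : Fin p, h (ii a) (jj a)) * h s j
  = ∑ II : Fin (p+1) → Fin d, ∑ JJ : Fin (p+1) → Fin d,
      Matrix.det (Matrix.of fun a b : Fin (p+1+1) =>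
        if Fin.cons (α := fun _ => Fin d) t II a = Fin.cons (α := fun _ => Fin d) l JJ b then (1:ℝ) else 0)
      * ∏ a : Fin (p+1), h (II a) (JJ a) := by
  have hG : ∀ s j : Fin d,
      (∑ ii : Fin p → Fin d, ∑ jj : Fin p → Fin d,
        Matrix.det (Matrix.of fun a b : Fin (p+1+1) =>
          if (if ha : a.1 < p then ii ⟨a.1, ha⟩ else if a.1 = p then s else t)
            = (if hb : b.1 < p then jj ⟨b.1, hb⟩ else if b.1 = p then j else l) then (1:ℝ) else 0)
        * ∏ a : Fin p, h (ii a) (jj a)) * h s j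
      = ∑ ii : Fin p → Fin d, ∑ jj : Fin p → Fin d,
        Matrix.det (Matrix.of fun a b : Fin (p+1+1) =>
          if Fin.snoc (α := fun _ => Fin d) (Fin.snoc ii s) t a
            = Fin.snoc (α := fun _ => Fin d) (Fin.snoc jj j) l b then (1:ℝ) else 0)
        * ∏ a : Fin (p+1), h (Fin.snoc (α := fun _ => Fin d) ii s a) (Fin.snoc (α := fun _ => Fin d) jj j a) := by
    intro s j
    rw [Finset.sum_mul]
    refine Finset.sum_congr rfl fun ii _ => ?_
    rw [Finset.sum_mul]
    refine Finset.sum_congr rfl fun jj _ => ?_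
    rw [mul_assoc]
    congr 1
    · congr 1
      ext a b
      simp only [Matrix.of_apply]
      rw [congrFun (dite_eq_snoc ii s t) a, congrFun (dite_eq_snoc jj j l) b]
    · rw [Fin.prod_univ_castSucc]
      simp
  calc
    ∑ s : Fin d, ∑ j : Fin d,
      (∑ ii : Fin p → Fin d, ∑ jj : Fin p → Fin d,
        Matrix.det (Matrix.of fun a b : Fin (p+1+1) =>
          if (if ha : a.1 < p then ii ⟨a.1, ha⟩ else if a.1 = p then s else t)
            = (if hb : b.1 < p then jj ⟨b.1, hb⟩ else if b.1 = p then j else l) then (1:ℝ) else 0)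
        * ∏ a : Fin p, h (ii a) (jj a)) * h s j
      = ∑ s : Fin d, ∑ ii : Fin p → Fin d, ∑ j : Fin d, ∑ jj : Fin p → Fin d,
        Matrix.det (Matrix.of fun a b : Fin (p+1+1) =>
          if Fin.snoc (α := fun _ => Fin d) (Fin.snoc ii s) t a
            = Fin.snoc (α := fun _ => Fin d) (Fin.snoc jj j) l b then (1:ℝ) else 0)
        * ∏ a : Fin (p+1), h (Fin.snoc (α := fun _ => Fin d) ii s a) (Fin.snoc (α := fun _ => Fin d) jj j a) := by
      refine Finset.sum_congr rfl fun s _ => ?_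
      rw [show (∑ j : Fin d, _) = _ from Finset.sum_congr rfl fun j _ => hG s j]
      exact Finset.sum_comm
    _ = ∑ II : Fin (p+1) → Fin d, ∑ j : Fin d, ∑ jj : Fin p → Fin d,
        Matrix.det (Matrix.of fun a b : Fin (p+1+1) =>
          if Fin.snoc (α := fun _ => Fin d) II t a
            = Fin.snoc (α := fun _ => Fin d) (Fin.snoc jj j) l b then (1:ℝ) else 0)
        * ∏ a : Fin (p+1), h (II a) (Fin.snoc (α := fun _ => Fin d) jj j a) :=
      sum_snoc (fun II => ∑ j : Fin d, ∑ jj : Fin p → Fin d,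
        Matrix.det (Matrix.of fun a b : Fin (p+1+1) =>
          if Fin.snoc (α := fun _ => Fin d) II t a
            = Fin.snoc (α := fun _ => Fin d) (Fin.snoc jj j) l b then (1:ℝ) else 0)
        * ∏ a : Fin (p+1), h (II a) (Fin.snoc (α := fun _ => Fin d) jj j a))
    _ = ∑ II : Fin (p+1) → Fin d, ∑ JJ : Fin (p+1) → Fin d,
        Matrix.det (Matrix.of fun a b : Fin (p+1+1) =>
          if Fin.snoc (α := fun _ => Fin d) II t a
            = Fin.snoc (α := fun _ => Fin d) JJ l b then (1:ℝ) else 0)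
        * ∏ a : Fin (p+1), h (II a) (JJ a) :=
      Finset.sum_congr rfl fun II _ => sum_snoc (fun JJ =>
        Matrix.det (Matrix.of fun a b : Fin (p+1+1) =>
          if Fin.snoc (α := fun _ => Fin d) II t a
            = Fin.snoc (α := fun _ => Fin d) JJ l b then (1:ℝ) else 0)
        * ∏ a : Fin (p+1), h (II a) (JJ a))
    _ = ∑ II : Fin (p+1) → Fin d, ∑ JJ : Fin (p+1) → Fin d,
        Matrix.det (Matrix.of fun a b : Fin (p+1+1) =>
          if Fin.cons (α := fun _ => Fin d) t II a = Fin.cons (α := fun _ => Fin d) l JJ b then (1:ℝ) else 0)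
        * ∏ a : Fin (p+1), h (II a) (JJ a) := by
      refine Finset.sum_congr rfl fun II _ => Finset.sum_congr rfl fun JJ _ => ?_
      rw [rot_det]

theorem stmt_11 (n k : ℕ) (hk : 1 ≤ k) (h2k : 2 * k ≤ n - 1)
    (h : Matrix (Fin (n - 1)) (Fin (n - 1)) ℝ) (hh : h.IsHermitian) :
    let δ : (m : ℕ) → (Fin m → Fin (n - 1)) → (Fin m → Fin (n - 1)) → ℝ := fun m I J =>
      Matrix.det (Matrix.of fun a b : Fin m => if I a = J b then (1 : ℝ) else 0)
    let P : Fin (n - 1) → Fin (n - 1) → Fin (n - 1) → Fin (n - 1) → ℝ := fun s t j l =>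
      (1 / 2 : ℝ) *
        ∑ ii : Fin (2 * k - 2) → Fin (n - 1), ∑ jj : Fin (2 * k - 2) → Fin (n - 1),
          δ (2 * k)
            (fun a => if ha : a.1 < 2 * k - 2 then ii ⟨a.1, ha⟩
              else if a.1 = 2 * k - 2 then s else t)
            (fun a => if ha : a.1 < 2 * k - 2 then jj ⟨a.1, ha⟩
              else if a.1 = 2 * k - 2 then j else l) *
          ∏ a : Fin (2 * k - 2), h (ii a) (jj a)
    let T : Fin (n - 1) → Fin (n - 1) → ℝ := fun t l =>
      (1 / ((2 * k - 1).factorial : ℝ)) *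
        ∑ ii : Fin (2 * k - 1) → Fin (n - 1), ∑ jj : Fin (2 * k - 1) → Fin (n - 1),
          δ (2 * k - 1 + 1) (Fin.cons t ii) (Fin.cons l jj) *
          ∏ a : Fin (2 * k - 1), h (ii a) (jj a)
    ∀ t l, 2 * ∑ s, ∑ j, P s t j l * h s j = ((2 * k - 1).factorial : ℝ) * T t l := by
  intro δ P T t l
  simp only [δ, P, T]
  obtain ⟨q, rfl⟩ : ∃ q, k = q + 1 := ⟨k - 1, by omega⟩
  have e0 : 2 * (q + 1) = 2 * q + 2 := by ring
  have e1 : 2 * q + 2 - 2 = 2 * q := by omega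
  have e2 : 2 * q + 2 - 1 = 2 * q + 1 := by omega
  simp only [e0, e1, e2]
  have hC : ((2 * q + 1).factorial : ℝ) ≠ 0 := Nat.cast_ne_zero.2 (Nat.factorial_ne_zero _)
  rw [← mul_assoc ((2 * q + 1).factorial : ℝ), mul_one_div_cancel hC, one_mul]
  simp only [mul_assoc, ← Finset.mul_sum]
  rw [← mul_assoc]
  norm_num
  exact key (n - 1) (2 * q) h t l
end
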